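/- Let H and K be real inner product spaces, let D : H → K be a linear map, let φ_1, …, φ_R be an orthonormal family in H with span X_R and orthogonal projection Π_R v := Σ_{i=1}^R ⟨v, φ_i⟩ φ_i, and define the symmetric R×R matrix S by S_{ii'} = ⟨φ_i, φ_{i'}⟩_H + ⟨Dφ_i, Dφ_{i'}⟩_K. Then for all w, u ∈ H, ‖D(w − Π_R w)‖ ≤ ‖D(w − u)‖ + ‖S‖₂^{1/2} ‖w − u‖ + ‖D(u − Π_R u)‖, where ‖S‖₂ denotes the spectral norm of S. Consequently ‖D(w − Π_R w)‖² ≤ 4‖D(w − u)‖² + 4‖S‖₂‖w − u‖² + 2‖D(u − Π_R u)‖². -/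

import Mathlib

open RealInnerProductSpace

/-- The spectral norm of a real `R × R` matrix: the operator norm of the
associated linear map on Euclidean space. -/
noncomputable def matrixSpectralNorm {R : ℕ} (S : Matrix (Fin R) (Fin R) ℝ) : ℝ :=
  ‖(Matrix.toEuclideanCLM (𝕜 := ℝ) S :
      EuclideanSpace ℝ (Fin R) →L[ℝ] EuclideanSpace ℝ (Fin R))‖

lemma pod_key {H K : Type*} [NormedAddCommGroup H] [InnerProductSpace ℝ H]
    [NormedAddCommGroup K] [InnerProductSpace ℝ K]
    (D : H →ₗ[ℝ] K) {R : ℕ} (φ : Fin R → H) (hortho : Orthonormal ℝ φ)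
    (S : Matrix (Fin R) (Fin R) ℝ)
    (hS : ∀ i i' : Fin R, S i i' = ⟪φ i, φ i'⟫ + ⟪D (φ i), D (φ i')⟫)
    (v : H) :
    ‖D (∑ i, ⟪v, φ i⟫ • φ i)‖ ^ 2 ≤ matrixSpectralNorm S * ‖v‖ ^ 2 := by
  set c : EuclideanSpace ℝ (Fin R) := (WithLp.equiv 2 (Fin R → ℝ)).symm (fun i => ⟪v, φ i⟫)
    with hc
  have hci : ∀ i, c i = ⟪v, φ i⟫ := fun i => rfl
  set x : H := ∑ i, ⟪v, φ i⟫ • φ i with hx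
  have hSc : ∀ i, (Matrix.toEuclideanCLM (𝕜 := ℝ) S) c i = ∑ j, S i j * c j := by
    intro i
    have := congrFun (Matrix.ofLp_toEuclideanCLM (𝕜 := ℝ) S c) i
    simpa [Matrix.mulVec, dotProduct] using this
  -- ‖x‖² + ‖D x‖² = ⟪S c, c⟫
  have hquad : ‖x‖ ^ 2 + ‖D x‖ ^ 2 =
      ⟪(Matrix.toEuclideanCLM (𝕜 := ℝ) S) c, c⟫ := by
    have hDx : D x = ∑ i, ⟪v, φ i⟫ • D (φ i) := by
      rw [hx, map_sum]; simp
    have h1 : ‖x‖ ^ 2 = ∑ i, ∑ j, c i * c j * ⟪φ i, φ j⟫ := by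
      rw [← real_inner_self_eq_norm_sq, hx, sum_inner]
      refine Finset.sum_congr rfl fun i _ => ?_
      rw [inner_sum]
      refine Finset.sum_congr rfl fun j _ => ?_
      rw [real_inner_smul_left, real_inner_smul_right, hci, hci]; ring
    have h2 : ‖D x‖ ^ 2 = ∑ i, ∑ j, c i * c j * ⟪D (φ i), D (φ j)⟫ := by
      rw [← real_inner_self_eq_norm_sq, hDx, sum_inner]
      refine Finset.sum_congr rfl fun i _ => ?_
      rw [inner_sum]
      refine Finset.sum_congr rfl fun j _ => ?_
      rw [real_inner_smul_left, real_inner_smul_right, hci, hci]; ring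
    have h3 : ⟪(Matrix.toEuclideanCLM (𝕜 := ℝ) S) c, c⟫ =
        ∑ i, ∑ j, c i * c j * S i j := by
      rw [PiLp.inner_apply]
      refine Finset.sum_congr rfl fun i _ => ?_
      rw [hSc i, RCLike.inner_apply]
      simp only [starRingEnd_apply, star_trivial]
      rw [Finset.mul_sum]
      refine Finset.sum_congr rfl fun j _ => ?_
      ring
    rw [h1, h2, h3, ← Finset.sum_add_distrib]
    refine Finset.sum_congr rfl fun i _ => ?_
    rw [← Finset.sum_add_distrib]
    refine Finset.sum_congr rfl fun j _ => ?_
    rw [hS i j]; ring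
  have hbessel : ‖c‖ ^ 2 ≤ ‖v‖ ^ 2 := by
    have := hortho.sum_inner_products_le (s := Finset.univ) v
    have hcn : ‖c‖ ^ 2 = ∑ i, ‖⟪φ i, v⟫‖ ^ 2 := by
      rw [← real_inner_self_eq_norm_sq, PiLp.inner_apply]
      refine Finset.sum_congr rfl fun i _ => ?_
      simp [hci, real_inner_comm v (φ i), starRingEnd_apply, Real.norm_eq_abs, sq_abs, sq]
    rw [hcn]; exact this
  have hinner : ⟪(Matrix.toEuclideanCLM (𝕜 := ℝ) S) c, c⟫ ≤ matrixSpectralNorm S * ‖v‖ ^ 2 := by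
    calc ⟪(Matrix.toEuclideanCLM (𝕜 := ℝ) S) c, c⟫
        ≤ ‖(Matrix.toEuclideanCLM (𝕜 := ℝ) S) c‖ * ‖c‖ := real_inner_le_norm _ _
      _ ≤ (matrixSpectralNorm S * ‖c‖) * ‖c‖ := by
          have := (Matrix.toEuclideanCLM (𝕜 := ℝ) S).le_opNorm c
          exact mul_le_mul_of_nonneg_right this (norm_nonneg _)
      _ = matrixSpectralNorm S * ‖c‖ ^ 2 := by ring
      _ ≤ matrixSpectralNorm S * ‖v‖ ^ 2 :=
          mul_le_mul_of_nonneg_left hbessel (norm_nonneg _)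
  nlinarith [sq_nonneg ‖x‖]

/-- The D-seminorm (H¹) splitting inequality for the POD projection: with `φ₁, …, φ_R`
an orthonormal family in `H`, `Π_R v = Σ_{i=1}^R ⟨v, φ_i⟩ φ_i`, `D : H → K` linear, and
`S` the matrix with entries `S_{ii'} = ⟨φ_i, φ_{i'}⟩ + ⟨Dφ_i, Dφ_{i'}⟩`, one has for all
`w, u ∈ H`:
`‖D(w − Π_R w)‖ ≤ ‖D(w − u)‖ + ‖S‖₂^{1/2} ‖w − u‖ + ‖D(u − Π_R u)‖`, and consequently
`‖D(w − Π_R w)‖² ≤ 4‖D(w − u)‖² + 4‖S‖₂‖w − u‖² + 2‖D(u − Π_R u)‖²`. -/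
theorem pod_gradient_projection_error_splitting
    {H K : Type*} [NormedAddCommGroup H] [InnerProductSpace ℝ H]
    [NormedAddCommGroup K] [InnerProductSpace ℝ K]
    (D : H →ₗ[ℝ] K) {R : ℕ} (φ : Fin R → H) (hortho : Orthonormal ℝ φ)
    (S : Matrix (Fin R) (Fin R) ℝ)
    (hS : ∀ i i' : Fin R, S i i' = ⟪φ i, φ i'⟫ + ⟪D (φ i), D (φ i')⟫)
    (P : H → H) (hP : ∀ v, P v = ∑ i, ⟪v, φ i⟫ • φ i)
    (w u : H) :
    ‖D (w - P w)‖ ≤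
        ‖D (w - u)‖ + Real.sqrt (matrixSpectralNorm S) * ‖w - u‖ + ‖D (u - P u)‖ ∧
      ‖D (w - P w)‖ ^ 2 ≤
        4 * ‖D (w - u)‖ ^ 2 + 4 * matrixSpectralNorm S * ‖w - u‖ ^ 2
          + 2 * ‖D (u - P u)‖ ^ 2 := by
  have hs0 : 0 ≤ matrixSpectralNorm S := norm_nonneg _
  -- P u - P w = projection of u - w
  have hPsub : P u - P w = ∑ i, ⟪u - w, φ i⟫ • φ i := by
    rw [hP, hP, ← Finset.sum_sub_distrib]
    refine Finset.sum_congr rfl fun i _ => ?_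
    rw [inner_sub_left, sub_smul]
  have hb2 : ‖D (P u - P w)‖ ^ 2 ≤ matrixSpectralNorm S * ‖u - w‖ ^ 2 := by
    rw [hPsub]; exact pod_key D φ hortho S hS (u - w)
  have hb : ‖D (P u - P w)‖ ≤ Real.sqrt (matrixSpectralNorm S) * ‖w - u‖ := by
    have h := Real.sqrt_le_sqrt hb2
    rw [Real.sqrt_sq (norm_nonneg _), Real.sqrt_mul hs0,
      Real.sqrt_sq (norm_nonneg _), norm_sub_rev u w] at h
    exact h
  have hid : D (w - P w) = D (w - u) + D (P u - P w) + D (u - P u) := by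
    rw [← map_add, ← map_add]; congr 1; abel
  have h1 : ‖D (w - P w)‖ ≤
      ‖D (w - u)‖ + Real.sqrt (matrixSpectralNorm S) * ‖w - u‖ + ‖D (u - P u)‖ := by
    calc ‖D (w - P w)‖ = ‖D (w - u) + D (P u - P w) + D (u - P u)‖ := by rw [hid]
      _ ≤ ‖D (w - u)‖ + ‖D (P u - P w)‖ + ‖D (u - P u)‖ := norm_add₃_le
      _ ≤ _ := by gcongr
  refine ⟨h1, ?_⟩
  set a := ‖D (w - u)‖
  set b := Real.sqrt (matrixSpectralNorm S) * ‖w - u‖ with hbdef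
  set cc := ‖D (u - P u)‖
  have hbsq : b ^ 2 = matrixSpectralNorm S * ‖w - u‖ ^ 2 := by
    rw [hbdef, mul_pow, Real.sq_sqrt hs0]
  have ha0 : 0 ≤ a := norm_nonneg _
  have hb0 : 0 ≤ b := mul_nonneg (Real.sqrt_nonneg _) (norm_nonneg _)
  have hc0 : 0 ≤ cc := norm_nonneg _
  have hd0 : 0 ≤ ‖D (w - P w)‖ := norm_nonneg _
  have hsq : ‖D (w - P w)‖ ^ 2 ≤ (a + b + cc) ^ 2 := by
    apply pow_le_pow_left₀ hd0 h1
  nlinarith [sq_nonneg (a - b), sq_nonneg (a + b - cc), hbsq]
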